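/- Let λ = (λ_1 ≥ λ_2 ≥ … ≥ λ_m ≥ 1) be a partition of N, let D be an N-dimensional complex vector space with basis e_{k,i} (1 ≤ i ≤ m, 1 ≤ k ≤ λ_i), and let x ∈ End(D) be the operator with x·e_{k,i} = e_{k−1,i} (e_{0,i} = 0). Let S_x ⊆ End(D) be the linear subspace of all f whose matrix entries f^{l,j}_{k,i} (the component of f mapping ℂe_{l,j} to ℂe_{k,i}) vanish whenever k ≠ λ_i, and also whenever k = λ_i and l > λ_i. Then dim_ℂ S_x = ∑_{i=1}^{m} ∑_{j=1}^{m} min(λ_i, λ_j), and End(D) decomposes as the direct sum End(D) = {x∘y − y∘x : y ∈ End(D)} ⊕ S_x of ℂ-linear subspaces. (Thus the affine subspace T_x = x + S_x is a transverse slice to the adjoint orbit of x in End(D).) -/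

import Mathlib

open Module

section MVaux

variable {m : ℕ} {lam : Fin m → ℕ} {D : Type} [AddCommGroup D] [Module ℂ D]

/-- Index type for the free coordinates of the slice. -/
def TTt (lam : Fin m → ℕ) : Type := Σ i : Fin m, Σ j : Fin m, Fin (min (lam i) (lam j))

instance : Fintype (TTt lam) := by unfold TTt; infer_instance

/-- The coordinate functional `f ↦ (b.repr (f (b s))) r` on `End ℂ D`. -/
noncomputable def coordF (b : Basis (Σ i : Fin m, Fin (lam i)) ℂ D)
    (r s : Σ i : Fin m, Fin (lam i)) : Module.End ℂ D →ₗ[ℂ] ℂ :=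
  (Finsupp.lapply r).comp (b.repr.toLinearMap.comp (LinearMap.applyₗ (b s)))

@[simp] lemma coordF_apply (b : Basis (Σ i : Fin m, Fin (lam i)) ℂ D)
    (r s : Σ i : Fin m, Fin (lam i)) (f : Module.End ℂ D) :
    coordF b r s f = b.repr (f (b s)) r := rfl

/-- Diagonal-sum functionals. -/
noncomputable def PhiF (b : Basis (Σ i : Fin m, Fin (lam i)) ℂ D) :
    Module.End ℂ D →ₗ[ℂ] (TTt lam → ℂ) :=
  LinearMap.pi fun p : TTt lam =>
    ∑ t : Fin ((p.2.2 : ℕ) + 1),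
      coordF b ⟨p.1, ⟨lam p.1 - 1 - (t : ℕ), by have := p.2.2.isLt; have := t.isLt; omega⟩⟩
        ⟨p.2.1, ⟨(p.2.2 : ℕ) - (t : ℕ), by have := p.2.2.isLt; omega⟩⟩

/-- Top-vector coordinate functionals. -/
noncomputable def PsiF (b : Basis (Σ i : Fin m, Fin (lam i)) ℂ D) :
    Module.End ℂ D →ₗ[ℂ] (TTt lam → ℂ) :=
  LinearMap.pi fun p : TTt lam =>
    coordF b ⟨p.1, ⟨(p.2.2 : ℕ), by have := p.2.2.isLt; omega⟩⟩
      ⟨p.2.1, ⟨lam p.2.1 - 1, by have := p.2.2.isLt; omega⟩⟩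

/-- Auxiliary telescoping function. -/
noncomputable def Gfun (b : Basis (Σ i : Fin m, Fin (lam i)) ℂ D) (y : Module.End ℂ D)
    (i j : Fin m) (l : Fin (min (lam i) (lam j))) (u : ℕ) : ℂ :=
  if h : 1 ≤ u ∧ u ≤ (l : ℕ) then
    b.repr (y (b ⟨j, ⟨(l : ℕ) - u, by have := l.isLt; omega⟩⟩))
      ⟨i, ⟨lam i - u, by have := l.isLt; omega⟩⟩
  else 0

lemma delta_repr (b : Basis (Σ i : Fin m, Fin (lam i)) ℂ D)
    (i j : Fin m) (k : Fin (lam i)) (l : Fin (lam j)) :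
    b.repr (b ⟨j, l⟩) ⟨i, k⟩ = if j = i ∧ (l : ℕ) = (k : ℕ) then 1 else 0 := by
  classical
  rw [b.repr_self, Finsupp.single_apply]
  have h : ((⟨j, l⟩ : Σ i : Fin m, Fin (lam i)) = ⟨i, k⟩) ↔ (j = i ∧ (l : ℕ) = (k : ℕ)) := by
    constructor
    · intro h; cases h; exact ⟨rfl, rfl⟩
    · rintro ⟨rfl, h2⟩; exact congrArg _ (Fin.ext h2)
  simp only [h]

variable (b : Basis (Σ i : Fin m, Fin (lam i)) ℂ D) (x : Module.End ℂ D)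
variable (hx : ∀ (i : Fin m) (k : Fin (lam i)),
      x (b ⟨i, k⟩) =
        if _h : (k : ℕ) = 0 then 0
        else b ⟨i, ⟨(k : ℕ) - 1, lt_of_le_of_lt (Nat.sub_le _ _) k.isLt⟩⟩)

include hx

lemma xpow_basis (t : ℕ) (i : Fin m) (l : Fin (lam i)) :
    (x ^ t) (b ⟨i, l⟩) =
      if h : t ≤ (l : ℕ) then b ⟨i, ⟨(l : ℕ) - t, by have := l.isLt; omega⟩⟩ else 0 := by
  induction t generalizing l with
  | zero => simp
  | succ t ih =>
    rw [pow_succ, Module.End.mul_apply, hx i l]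
    by_cases h0 : (l : ℕ) = 0
    · simp only [h0, dif_pos]
      rw [dif_neg (by omega), map_zero]
    · rw [dif_neg h0, ih]
      by_cases h1 : t ≤ (l : ℕ) - 1
      · rw [dif_pos h1, dif_pos (by omega)]
        exact congrArg (fun z : Fin (lam i) => b ⟨i, z⟩) (Fin.ext (by simp; omega))
      · rw [dif_neg h1, dif_neg (by omega)]

lemma repr_x (v : D) (i : Fin m) (k : Fin (lam i)) :
    b.repr (x v) ⟨i, k⟩ =
      if h : (k : ℕ) + 1 < lam i then b.repr v ⟨i, ⟨(k : ℕ) + 1, h⟩⟩ else 0 := by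
  classical
  by_cases h : (k : ℕ) + 1 < lam i
  · rw [dif_pos h]
    have key : (Finsupp.lapply (⟨i, k⟩ : Σ i : Fin m, Fin (lam i))).comp
          (b.repr.toLinearMap.comp (x : D →ₗ[ℂ] D)) =
        (Finsupp.lapply (⟨i, ⟨(k : ℕ) + 1, h⟩⟩ : Σ i : Fin m, Fin (lam i))).comp
          b.repr.toLinearMap := by
      apply b.ext
      rintro ⟨j, l⟩
      simp only [LinearMap.comp_apply, LinearEquiv.coe_coe, Finsupp.lapply_apply]
      rw [hx j l, delta_repr]
      by_cases h0 : (l : ℕ) = 0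
      · have hne : ¬(j = i ∧ (l : ℕ) = (k : ℕ) + 1) := by
          rintro ⟨rfl, h2⟩; omega
        rw [dif_pos h0, map_zero, if_neg hne]
        rfl
      · rw [dif_neg h0, delta_repr]
        rcases eq_or_ne j i with rfl | hji
        · have hlt := l.isLt
          by_cases h3 : (l : ℕ) - 1 = (k : ℕ)
          · rw [if_pos ⟨rfl, h3⟩, if_pos ⟨rfl, show (l : ℕ) = (k : ℕ) + 1 by omega⟩]
          · have hne1 : ¬(j = j ∧ (l : ℕ) - 1 = (k : ℕ)) := by
              rintro ⟨-, h2⟩; omega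
            have hne2 : ¬(j = j ∧ (l : ℕ) = (k : ℕ) + 1) := by
              rintro ⟨-, h2⟩; omega
            rw [if_neg hne1, if_neg hne2]
        · have hne1 : ¬(j = i ∧ (l : ℕ) - 1 = (k : ℕ)) := fun hc => hji hc.1
          have hne2 : ¬(j = i ∧ (l : ℕ) = (k : ℕ) + 1) := fun hc => hji hc.1
          rw [if_neg hne1, if_neg hne2]
    exact (LinearMap.congr_fun key v : _)
  · rw [dif_neg h]
    have key : (Finsupp.lapply (⟨i, k⟩ : Σ i : Fin m, Fin (lam i))).comp
        (b.repr.toLinearMap.comp (x : D →ₗ[ℂ] D)) = 0 := by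
      apply b.ext
      rintro ⟨j, l⟩
      simp only [LinearMap.comp_apply, LinearEquiv.coe_coe, Finsupp.lapply_apply,
        LinearMap.zero_apply]
      rw [hx j l]
      by_cases h0 : (l : ℕ) = 0
      · rw [dif_pos h0, map_zero]; rfl
      · have hlt := l.isLt
        have hne : ¬(j = i ∧ (l : ℕ) - 1 = (k : ℕ)) := by
          rintro ⟨rfl, h2⟩; omega
        rw [dif_neg h0, delta_repr, if_neg hne]
    exact (LinearMap.congr_fun key v : _)

lemma repr_xpow (t : ℕ) (v : D) (i : Fin m) (k : Fin (lam i)) :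
    b.repr ((x ^ t) v) ⟨i, k⟩ =
      if h : (k : ℕ) + t < lam i then b.repr v ⟨i, ⟨(k : ℕ) + t, h⟩⟩ else 0 := by
  induction t generalizing k with
  | zero =>
    have hk := k.isLt
    rw [pow_zero, dif_pos (by omega)]
    simp
  | succ t ih =>
    rw [pow_succ', Module.End.mul_apply, repr_x b x hx]
    by_cases h1 : (k : ℕ) + 1 < lam i
    · rw [dif_pos h1, ih]
      by_cases h2 : (k : ℕ) + 1 + t < lam i
      · rw [dif_pos h2, dif_pos (show (k : ℕ) + (t + 1) < lam i by omega)]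
        exact congrArg (fun z : Fin (lam i) => b.repr v ⟨i, z⟩)
          (Fin.ext (show (k : ℕ) + 1 + t = (k : ℕ) + (t + 1) by omega))
      · rw [dif_neg h2, dif_neg (by omega)]
    · rw [dif_neg h1, dif_neg (by omega)]

lemma Phi_ad (y : Module.End ℂ D) (p : TTt lam) :
    PhiF b (x * y - y * x) p = 0 := by
  classical
  obtain ⟨i, j, l⟩ := p
  have hl := l.isLt
  have step : ∀ (t : ℕ) (ht : t ≤ (l : ℕ)) (h1 : (l : ℕ) - t < lam j)
      (h2 : lam i - 1 - t < lam i),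
      b.repr ((x * y - y * x) (b ⟨j, ⟨(l : ℕ) - t, h1⟩⟩)) ⟨i, ⟨lam i - 1 - t, h2⟩⟩ =
        Gfun b y i j l t - Gfun b y i j l (t + 1) := by
    intro t ht h1 h2
    have hA : b.repr ((x * y) (b ⟨j, ⟨(l : ℕ) - t, h1⟩⟩)) ⟨i, ⟨lam i - 1 - t, h2⟩⟩ =
        Gfun b y i j l t := by
      rw [Module.End.mul_apply, repr_x b x hx, Gfun]
      rcases Nat.eq_zero_or_pos t with rfl | hp
      · rw [dif_neg (show ¬(lam i - 1 - 0 + 1 < lam i) by omega), dif_neg (by omega)]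
      · rw [dif_pos (show lam i - 1 - t + 1 < lam i by omega), dif_pos ⟨hp, ht⟩]
        exact congrArg (fun z : Fin (lam i) =>
            b.repr (y (b ⟨j, ⟨(l : ℕ) - t, h1⟩⟩)) ⟨i, z⟩)
          (Fin.ext (show lam i - 1 - t + 1 = lam i - t by omega))
    have hB : b.repr ((y * x) (b ⟨j, ⟨(l : ℕ) - t, h1⟩⟩)) ⟨i, ⟨lam i - 1 - t, h2⟩⟩ =
        Gfun b y i j l (t + 1) := by
      rw [Module.End.mul_apply, hx j, Gfun]
      by_cases h4 : t = (l : ℕ)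
      · rw [dif_pos (show ((⟨(l : ℕ) - t, h1⟩ : Fin (lam j)) : ℕ) = 0 by
            show (l : ℕ) - t = 0; omega), map_zero, dif_neg (by omega)]
        simp
      · rw [dif_neg (show ¬((⟨(l : ℕ) - t, h1⟩ : Fin (lam j)) : ℕ) = 0 by
            show ¬((l : ℕ) - t = 0); omega), dif_pos ⟨by omega, by omega⟩]
        exact congrArg₂ (fun (a : Fin (lam j)) (c : Fin (lam i)) =>
            b.repr (y (b ⟨j, a⟩)) ⟨i, c⟩)
          (Fin.ext (show (l : ℕ) - t - 1 = (l : ℕ) - (t + 1) by omega))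
          (Fin.ext (show lam i - 1 - t = lam i - (t + 1) by omega))
    simp only [LinearMap.sub_apply, map_sub, Finsupp.sub_apply]
    rw [hA, hB]
  have expand : PhiF b (x * y - y * x) ⟨i, j, l⟩ =
      ∑ t : Fin ((l : ℕ) + 1), (Gfun b y i j l t - Gfun b y i j l ((t : ℕ) + 1)) := by
    simp only [PhiF]
    erw [LinearMap.pi_apply]
    simp only [LinearMap.sum_apply, coordF_apply]
    refine Finset.sum_congr rfl fun t _ => ?_
    exact step t (by omega) _ _
  rw [expand, Fin.sum_univ_eq_sum_range (fun u => Gfun b y i j l u - Gfun b y i j l (u + 1)),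
    Finset.sum_range_sub' (fun u => Gfun b y i j l u)]
  rw [show Gfun b y i j l 0 = 0 from dif_neg (by omega),
    show Gfun b y i j l ((l : ℕ) + 1) = 0 from dif_neg (by omega), sub_zero]

end MVaux

/-- Let `λ = (λ_1 ≥ … ≥ λ_m ≥ 1)` be a partition of `N`, `D` an
`N`-dimensional complex vector space with basis `e_{k,i}` (`1 ≤ i ≤ m`,
`1 ≤ k ≤ λ_i`, with `k` encoded as an element of `Fin (λ i)` representing `k+1`),
and `x` the operator with `x e_{k,i} = e_{k-1,i}` (`e_{0,i} = 0`).  Let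
`S_x ⊆ End(D)` be the subspace of all `f` whose matrix entries `f^{l,j}_{k,i}`
(the coefficient of `e_{k,i}` in `f(e_{l,j})`) vanish whenever `k ≠ λ_i`, and
whenever `k = λ_i` and `l > λ_i` (i.e. whenever `k ≠ λ_i` or `l > λ_i`).  Then
`dim_ℂ S_x = ∑_{i,j} min(λ_i, λ_j)`, and `End(D)` is the direct sum of the
commutator space `{x∘y - y∘x : y ∈ End(D)}` and `S_x`. -/
theorem stmt6 (m N : ℕ) (lam : Fin m → ℕ)
    (hlam_mono : ∀ i j : Fin m, i ≤ j → lam j ≤ lam i)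
    (hlam_pos : ∀ i, 1 ≤ lam i)
    (hN : ∑ i, lam i = N)
    (D : Type) [AddCommGroup D] [Module ℂ D]
    (b : Basis (Σ i : Fin m, Fin (lam i)) ℂ D)
    (x : Module.End ℂ D)
    (hx : ∀ (i : Fin m) (k : Fin (lam i)),
      x (b ⟨i, k⟩) =
        if h : (k : ℕ) = 0 then 0
        else b ⟨i, ⟨(k : ℕ) - 1, lt_of_le_of_lt (Nat.sub_le _ _) k.isLt⟩⟩)
    (S : Submodule ℂ (Module.End ℂ D))
    (hS : ∀ f : Module.End ℂ D, f ∈ S ↔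
      ∀ (i : Fin m) (k : Fin (lam i)) (j : Fin m) (l : Fin (lam j)),
        ((k : ℕ) + 1 ≠ lam i ∨ lam i < (l : ℕ) + 1) →
          b.repr (f (b ⟨j, l⟩)) ⟨i, k⟩ = 0) :
    Module.finrank ℂ S = (∑ i : Fin m, ∑ j : Fin m, min (lam i) (lam j)) ∧
    IsCompl (LinearMap.range (LinearMap.mulLeft ℂ x - LinearMap.mulRight ℂ x)) S := by
  classical
  haveI : Module.Finite ℂ D := Module.Finite.of_basis b
  -- Φ restricted to S reads the top-row entries
  have hPhiS : ∀ f ∈ S, ∀ (i j : Fin m) (l : Fin (min (lam i) (lam j)))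
      (hli : (l : ℕ) < lam j) (hti : lam i - 1 < lam i),
      PhiF b f ⟨i, j, l⟩ = b.repr (f (b ⟨j, ⟨(l : ℕ), hli⟩⟩)) ⟨i, ⟨lam i - 1, hti⟩⟩ := by
    intro f hf i j l hli hti
    have hl := l.isLt
    simp only [PhiF]
    erw [LinearMap.pi_apply]
    simp only [LinearMap.sum_apply, coordF_apply]
    rw [Finset.sum_eq_single (0 : Fin ((l : ℕ) + 1))]
    · exact congrArg₂ (fun (a : Fin (lam j)) (c : Fin (lam i)) =>
          b.repr (f (b ⟨j, a⟩)) ⟨i, c⟩)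
        (Fin.ext (show (l : ℕ) - ((0 : Fin ((l : ℕ) + 1)) : ℕ) = (l : ℕ) by simp))
        (Fin.ext (show lam i - 1 - ((0 : Fin ((l : ℕ) + 1)) : ℕ) = lam i - 1 by simp))
    · intro t _ ht
      have htv : (t : ℕ) ≠ 0 := fun hc => ht (Fin.ext hc)
      refine (hS f).mp hf i _ j _ (Or.inl ?_)
      show lam i - 1 - (t : ℕ) + 1 ≠ lam i
      have ht2 := t.isLt
      omega
    · intro hmem
      exact absurd (Finset.mem_univ _) hmem
  -- Φ is injective on S
  have hinjS : ∀ f ∈ S, PhiF b f = 0 → f = 0 := by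
    intro f hf h0
    apply b.ext
    rintro ⟨j, l⟩
    rw [LinearMap.zero_apply]
    refine (b.repr.map_eq_zero_iff).mp (Finsupp.ext ?_)
    rintro ⟨i, k⟩
    by_cases hk : (k : ℕ) + 1 = lam i ∧ (l : ℕ) + 1 ≤ lam i
    · have hlm : (l : ℕ) < min (lam i) (lam j) := by have := l.isLt; omega
      have hker := congrFun h0 ⟨i, j, ⟨(l : ℕ), hlm⟩⟩
      rw [hPhiS f hf i j ⟨(l : ℕ), hlm⟩ l.isLt (by have := k.isLt; omega)] at hker
      have ek : k = ⟨lam i - 1, by have := k.isLt; omega⟩ :=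
        Fin.ext (show (k : ℕ) = lam i - 1 by omega)
      rw [ek]
      exact hker
    · exact (hS f).mp hf i k j l (by omega)
  -- Φ is surjective from S
  have hsurjS : ∀ c : TTt lam → ℂ, ∃ f ∈ S, PhiF b f = c := by
    intro c
    set g : (Σ i : Fin m, Fin (lam i)) → D := fun s =>
      ∑ i : Fin m, (if h : (s.2 : ℕ) < min (lam i) (lam s.1) then
        c ⟨i, s.1, ⟨(s.2 : ℕ), h⟩⟩ • b ⟨i, ⟨lam i - 1, by have := hlam_pos i; omega⟩⟩
        else 0) with hg
    have hrepr : ∀ (j : Fin m) (l : Fin (lam j)) (i : Fin m) (k : Fin (lam i)),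
        b.repr ((b.constr ℂ g) (b ⟨j, l⟩)) ⟨i, k⟩ =
          if h : (l : ℕ) < min (lam i) (lam j) ∧ (k : ℕ) = lam i - 1 then
            c ⟨i, j, ⟨(l : ℕ), h.1⟩⟩ else 0 := by
      intro j l i k
      rw [Basis.constr_basis, hg]
      simp only [map_sum, Finsupp.finset_sum_apply]
      rw [Finset.sum_eq_single i]
      · by_cases h : (l : ℕ) < min (lam i) (lam j)
        · rw [dif_pos h, map_smul, Finsupp.smul_apply, delta_repr]
          by_cases hk : (k : ℕ) = lam i - 1
          · rw [if_pos ⟨rfl, hk.symm⟩, dif_pos ⟨h, hk⟩, smul_eq_mul, mul_one]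
          · rw [if_neg (by rintro ⟨-, h2⟩; exact hk h2.symm), dif_neg (by tauto),
              smul_eq_mul, mul_zero]
        · rw [dif_neg h, dif_neg (by tauto)]
          simp
      · intro i' _ hii
        by_cases h : (l : ℕ) < min (lam i') (lam j)
        · rw [dif_pos h, map_smul, Finsupp.smul_apply, delta_repr,
            if_neg (fun hc => hii hc.1), smul_eq_mul, mul_zero]
        · rw [dif_neg h]
          simp
      · intro hmem
        exact absurd (Finset.mem_univ _) hmem
    have hfS : b.constr ℂ g ∈ S := by
      refine (hS _).mpr fun i k j l hcond => ?_
      rw [hrepr]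
      have hki := k.isLt
      refine dif_neg ?_
      rintro ⟨h1, h2⟩
      rcases hcond with h | h <;> omega
    refine ⟨b.constr ℂ g, hfS, funext fun p => ?_⟩
    obtain ⟨i, j, l⟩ := p
    have hl := l.isLt
    rw [hPhiS _ hfS i j l (by omega) (by have := hlam_pos i; omega), hrepr]
    rw [dif_pos ⟨show (l : ℕ) < min (lam i) (lam j) by omega, rfl⟩]
  -- the commutator range is contained in ker Φ
  set ad := LinearMap.mulLeft ℂ x - LinearMap.mulRight ℂ x with had
  have hr_le : LinearMap.range ad ≤ LinearMap.ker (PhiF b) := by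
    rintro w ⟨y, rfl⟩
    rw [LinearMap.mem_ker]
    have : ad y = x * y - y * x := by
      simp [had, LinearMap.sub_apply, LinearMap.mulLeft_apply, LinearMap.mulRight_apply]
    rw [this]
    exact funext fun p => Phi_ad b x hx y p
  -- injectivity of Ψ on the centralizer
  have hker : ∀ y : Module.End ℂ D, x * y - y * x = 0 → PsiF b y = 0 → y = 0 := by
    intro y hcomm h0
    have hc : x * y = y * x := by rwa [sub_eq_zero] at hcomm
    have hcpow : ∀ t : ℕ, x ^ t * y = y * x ^ t := fun t => (Commute.pow_left hc t)
    have htop : ∀ j : Fin m,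
        y (b ⟨j, ⟨lam j - 1, by have := hlam_pos j; omega⟩⟩) = 0 := by
      intro j
      refine (b.repr.map_eq_zero_iff).mp (Finsupp.ext ?_)
      rintro ⟨i, k⟩
      by_cases hk : (k : ℕ) < lam j
      · have hlm : (k : ℕ) < min (lam i) (lam j) := by have := k.isLt; omega
        have := congrFun h0 ⟨i, j, ⟨(k : ℕ), hlm⟩⟩
        exact this
      · have h1 : (x ^ (lam j)) (y (b ⟨j, ⟨lam j - 1, by have := hlam_pos j; omega⟩⟩)) = 0 := by
          rw [← Module.End.mul_apply, hcpow, Module.End.mul_apply, xpow_basis b x hx,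
            dif_neg (show ¬(lam j ≤ lam j - 1) by have := hlam_pos j; omega), map_zero]
        have h2 := repr_xpow b x hx (lam j)
          (y (b ⟨j, ⟨lam j - 1, by have := hlam_pos j; omega⟩⟩)) i
          ⟨(k : ℕ) - lam j, by have := k.isLt; omega⟩
        rw [h1, dif_pos (show (k : ℕ) - lam j + lam j < lam i by have := k.isLt; omega)] at h2
        simp only [map_zero, Finsupp.zero_apply] at h2
        have ek : (⟨(k : ℕ) - lam j + lam j, by have := k.isLt; omega⟩ : Fin (lam i)) = k :=
          Fin.ext (show (k : ℕ) - lam j + lam j = (k : ℕ) by omega)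
        rw [ek] at h2
        exact h2.symm
    apply b.ext
    rintro ⟨j, l⟩
    have hl := l.isLt
    have hbl : b ⟨j, l⟩ =
        (x ^ (lam j - 1 - (l : ℕ))) (b ⟨j, ⟨lam j - 1, by have := hlam_pos j; omega⟩⟩) := by
      rw [xpow_basis b x hx, dif_pos (show lam j - 1 - (l : ℕ) ≤ lam j - 1 by omega)]
      exact (congrArg (fun z : Fin (lam j) => b ⟨j, z⟩) (Fin.ext (by simp; omega))).symm
    rw [LinearMap.zero_apply, hbl, ← Module.End.mul_apply, ← hcpow, Module.End.mul_apply,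
      htop j, map_zero]
  -- dimension bookkeeping
  have hcard : Fintype.card (TTt lam) = ∑ i : Fin m, ∑ j : Fin m, min (lam i) (lam j) := by
    show Fintype.card (Σ i : Fin m, Σ j : Fin m, Fin (min (lam i) (lam j))) = _
    simp [Fintype.card_sigma]
  have hfun : finrank ℂ (TTt lam → ℂ) = ∑ i : Fin m, ∑ j : Fin m, min (lam i) (lam j) := by
    rw [Module.finrank_fintype_fun_eq_card, hcard]
  -- the equivalence S ≃ coordinates
  let e : S →ₗ[ℂ] (TTt lam → ℂ) := (PhiF b).comp S.subtype
  have he_inj : Function.Injective e := by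
    refine (injective_iff_map_eq_zero e).mpr fun f hf => ?_
    exact Subtype.ext (hinjS f.1 f.2 hf)
  have he_surj : Function.Surjective e := by
    intro c
    obtain ⟨f, hfS, hf⟩ := hsurjS c
    exact ⟨⟨f, hfS⟩, hf⟩
  have hrankS : finrank ℂ S = ∑ i : Fin m, ∑ j : Fin m, min (lam i) (lam j) := by
    rw [(LinearEquiv.ofBijective e ⟨he_inj, he_surj⟩).finrank_eq, hfun]
  -- IsCompl (ker Φ) S
  have hdisj : Disjoint (LinearMap.ker (PhiF b)) S := by
    rw [Submodule.disjoint_def]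
    intro f hf1 hf2
    exact hinjS f hf2 (LinearMap.mem_ker.mp hf1)
  have hcodis : LinearMap.ker (PhiF b) ⊔ S = ⊤ := by
    rw [eq_top_iff]
    intro w _
    obtain ⟨f, hfS, hf⟩ := hsurjS (PhiF b w)
    refine Submodule.mem_sup.mpr ⟨w - f, ?_, f, hfS, by abel⟩
    rw [LinearMap.mem_ker, map_sub, hf, sub_self]
  -- finrank comparison
  have h1 : finrank ℂ (LinearMap.range ad) + finrank ℂ (LinearMap.ker ad) =
      finrank ℂ (Module.End ℂ D) := LinearMap.finrank_range_add_finrank_ker ad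
  have h2 : finrank ℂ (LinearMap.range (PhiF b)) + finrank ℂ (LinearMap.ker (PhiF b)) =
      finrank ℂ (Module.End ℂ D) := LinearMap.finrank_range_add_finrank_ker (PhiF b)
  have h3 : LinearMap.range (PhiF b) = ⊤ := by
    rw [LinearMap.range_eq_top]
    intro c
    obtain ⟨f, _, hf⟩ := hsurjS c
    exact ⟨f, hf⟩
  have h4 : finrank ℂ (LinearMap.range (PhiF b)) =
      ∑ i : Fin m, ∑ j : Fin m, min (lam i) (lam j) := by
    rw [h3, finrank_top, hfun]
  have h5 : finrank ℂ (LinearMap.ker ad) ≤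
      ∑ i : Fin m, ∑ j : Fin m, min (lam i) (lam j) := by
    have hinj : Function.Injective ((PsiF b).comp (LinearMap.ker ad).subtype) := by
      refine (injective_iff_map_eq_zero _).mpr fun y hy => ?_
      obtain ⟨y, hy2⟩ := y
      refine Subtype.ext (hker y ?_ hy)
      rw [LinearMap.mem_ker, had] at hy2
      simpa [LinearMap.sub_apply, LinearMap.mulLeft_apply, LinearMap.mulRight_apply]
        using hy2
    calc finrank ℂ (LinearMap.ker ad) ≤ finrank ℂ (TTt lam → ℂ) :=
          LinearMap.finrank_le_finrank_of_injective hinj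
      _ = _ := hfun
  have heq : LinearMap.range ad = LinearMap.ker (PhiF b) :=
    Submodule.eq_of_le_of_finrank_le hr_le (by omega)
  refine ⟨hrankS, ?_⟩
  rw [heq]
  exact ⟨hdisj, codisjoint_iff.mpr hcodis⟩
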